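/- Let R be a nearfield and T ⊆ R^n an R-subgroup. Suppose T_k ⊆ T_{k+1} are R-subgroups of R^n with decompositions T_k = ⊕_{i=1}^{ℓ} u_i R and T_{k+1} = ⊕_{i=1}^{ℓ'} u'_i R into nonzero vectors with mutually disjoint supports, and T_k ≠ T_{k+1}. Then the partition of ∪ supp(u'_i) by the supports of the u'_i strictly refines the partition by the supports of the u_i on the coordinates covered by both; in particular ℓ < ℓ' ≤ n. -/
import Mathlib


open scoped BigOperators

/-- A (left) nearfield: a zero-symmetric (left) nearring whose nonzero
elements form a multiplicative group. The additive group is abelian. -/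
class Nearfield (R : Type*) extends AddCommGroup R, One R, Mul R, Inv R where
  protected mul_assoc : ∀ a b c : R, a * b * c = a * (b * c)
  protected left_distrib : ∀ a b c : R, a * (b + c) = a * b + a * c
  protected zero_mul : ∀ a : R, (0 : R) * a = 0
  protected mul_zero : ∀ a : R, a * (0 : R) = 0
  protected one_mul : ∀ a : R, (1 : R) * a = a
  protected mul_one : ∀ a : R, a * (1 : R) = a
  protected one_ne_zero : (1 : R) ≠ 0
  protected mul_inv_cancel : ∀ a : R, a ≠ 0 → a * a⁻¹ = 1
  protected inv_mul_cancel : ∀ a : R, a ≠ 0 → a⁻¹ * a = 1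

namespace Nearfield

/-- A nearfield is proper if it is not a skewfield (right distributivity fails). -/
def IsProper (R : Type*) [Nearfield R] : Prop :=
  ∃ a b c : R, (a + b) * c ≠ a * c + b * c

variable {R : Type*} [Nearfield R]

/-- Right scalar multiplication on `R^n`, applied coordinatewise. -/
def vsmul {n : ℕ} (v : Fin n → R) (r : R) : Fin n → R := fun i => v i * r

/-- An `R`-subgroup of `R^n`: an additive subgroup closed under right scalar
multiplication. -/
def IsRSubgroup {n : ℕ} (H : Set (Fin n → R)) : Prop :=
  (0 : Fin n → R) ∈ H ∧ (∀ x ∈ H, ∀ y ∈ H, x + y ∈ H) ∧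
    (∀ x ∈ H, -x ∈ H) ∧ (∀ x ∈ H, ∀ r : R, vsmul x r ∈ H)

/-- `gen S` is the smallest `R`-subgroup containing `S`. -/
def gen {n : ℕ} (S : Set (Fin n → R)) : Set (Fin n → R) :=
  ⋂₀ {H : Set (Fin n → R) | IsRSubgroup H ∧ S ⊆ H}

/-- The support of a vector. -/
def supp {n : ℕ} (u : Fin n → R) : Set (Fin n) := {i | u i ≠ 0}

/-- `dirSum u = { Σ_i u_i r_i : r_i ∈ R }`. -/
def dirSum {n ℓ : ℕ} (u : Fin ℓ → Fin n → R) : Set (Fin n → R) :=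
  {v | ∃ r : Fin ℓ → R, v = ∑ i, vsmul (u i) (r i)}

/-- The "scalar product" `⟨x,y⟩ = Σ_i x_i·y_i`. -/
def dot {n : ℕ} (x y : Fin n → R) : R := ∑ i, x i * y i

/-- The weight of a vector: the number of its nonzero coordinates. -/
noncomputable def weight {n : ℕ} (u : Fin n → R) : ℕ := (supp u).ncard

/-- A vector is simple if it has weight one or two. -/
def IsSimple {n : ℕ} (u : Fin n → R) : Prop := weight u = 1 ∨ weight u = 2

/-- The orthogonal set `D^⊥`. -/
def perp {n : ℕ} (D : Set (Fin n → R)) : Set (Fin n → R) :=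
  {x | ∀ e ∈ D, dot e x = 0}

/-- `c(k,R)`: nonzero vectors of `R^k` whose first nonzero coordinate is `1`. -/
def cSet (R : Type*) [Nearfield R] (k : ℕ) : Set (Fin k → R) :=
  {u | ∃ i : Fin k, u i = 1 ∧ ∀ j : Fin k, j < i → u j = 0}

/-- The seed number of `T`: the least size of a set generating `T`. -/
noncomputable def seed {n : ℕ} (T : Set (Fin n → R)) : ℕ :=
  sInf {k | ∃ S : Finset (Fin n → R), S.card = k ∧ gen (↑S : Set (Fin n → R)) = T}

/-- Iterated linear-combination closures. -/
def LC {n : ℕ} (S : Set (Fin n → R)) : ℕ → Set (Fin n → R)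
  | 0 => S
  | m + 1 => {v | ∃ (ℓ : ℕ) (w : Fin ℓ → Fin n → R) (lam : Fin ℓ → R),
      (∀ i, w i ∈ LC S m) ∧ v = ∑ i, vsmul (w i) (lam i)}

end Nearfield

/-- Stirling numbers of the second kind. -/
def stirling2 : ℕ → ℕ → ℕ
  | 0, 0 => 1
  | 0, _ + 1 => 0
  | _ + 1, 0 => 0
  | n + 1, k + 1 => (k + 1) * stirling2 n (k + 1) + stirling2 n k

open Nearfield

section SupportRefinementAux

variable {R : Type*} [Nearfield R]

lemma nf_mul_ne_zero {a b : R} (ha : a ≠ 0) (hb : b ≠ 0) : a * b ≠ 0 := by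
  intro h
  apply hb
  calc b = (a⁻¹ * a) * b := by rw [Nearfield.inv_mul_cancel a ha, Nearfield.one_mul]
    _ = a⁻¹ * (a * b) := Nearfield.mul_assoc _ _ _
    _ = a⁻¹ * 0 := by rw [h]
    _ = 0 := Nearfield.mul_zero _

lemma nf_vsmul_zero {n : ℕ} (x : Fin n → R) : vsmul x (0 : R) = 0 :=
  funext fun _ => Nearfield.mul_zero _

lemma nf_vsmul_one {n : ℕ} (x : Fin n → R) : vsmul x (1 : R) = x :=
  funext fun _ => Nearfield.mul_one _

lemma nf_vsmul_vsmul {n : ℕ} (x : Fin n → R) (a b : R) :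
    vsmul (vsmul x a) b = vsmul x (a * b) :=
  funext fun _ => Nearfield.mul_assoc _ _ _

lemma nf_mem_supp {n : ℕ} {x : Fin n → R} {p : Fin n} : p ∈ supp x ↔ x p ≠ 0 := Iff.rfl

lemma nf_supp_nonempty {n : ℕ} {x : Fin n → R} (h : x ≠ 0) : (supp x).Nonempty := by
  by_contra h'
  rw [Set.not_nonempty_iff_eq_empty] at h'
  apply h
  funext p
  by_contra hp
  have : p ∈ supp x := hp
  rw [h'] at this
  exact this

lemma nf_sum_coord {n ℓ' : ℕ} {u' : Fin ℓ' → Fin n → R}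
    (hdisj' : ∀ i j, i ≠ j → supp (u' i) ∩ supp (u' j) = ∅)
    (r : Fin ℓ' → R) {j : Fin ℓ'} {p : Fin n} (hp : u' j p ≠ 0) :
    (∑ k, vsmul (u' k) (r k)) p = u' j p * r j := by
  rw [Finset.sum_apply]
  refine Finset.sum_eq_single j (fun k _ hk => ?_)
    (fun h => absurd (Finset.mem_univ j) h)
  have h0 : u' k p = 0 := by
    by_contra h
    have hmem : p ∈ supp (u' k) ∩ supp (u' j) := ⟨h, hp⟩
    rw [hdisj' k j hk] at hmem
    exact hmem
  show u' k p * r k = 0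
  rw [h0, Nearfield.zero_mul]

lemma nf_mem_dirSum_self {n ℓ : ℕ} (u : Fin ℓ → Fin n → R) (i : Fin ℓ) :
    u i ∈ dirSum u := by
  classical
  refine ⟨fun k => if k = i then 1 else 0, ?_⟩
  rw [Finset.sum_eq_single i (fun k _ hk => by simp only [if_neg hk, nf_vsmul_zero])
    (fun h => absurd (Finset.mem_univ i) h)]
  simp [nf_vsmul_one]

end SupportRefinementAux


/-- If `T_k ⊊ T_{k+1}` are `R`-subgroups with decompositions into nonzero
disjoint-support vectors, then the supports of the `u'_j` refine those of the
`u_i` on the covered coordinates, and `ℓ < ℓ' ≤ n`. -/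
theorem support_refinement {R : Type*} [Nearfield R] {n ℓ ℓ' : ℕ}
    (u : Fin ℓ → Fin n → R) (u' : Fin ℓ' → Fin n → R)
    (hne : ∀ i, u i ≠ 0) (hne' : ∀ j, u' j ≠ 0)
    (hdisj : ∀ i j, i ≠ j → supp (u i) ∩ supp (u j) = ∅)
    (hdisj' : ∀ i j, i ≠ j → supp (u' i) ∩ supp (u' j) = ∅)
    (hsub : dirSum u ⊆ dirSum u') (hneq : dirSum u ≠ dirSum u') :
    (∀ j : Fin ℓ', (supp (u' j) ∩ ⋃ i, supp (u i)).Nonempty →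
        ∃ i : Fin ℓ, supp (u' j) ⊆ supp (u i)) ∧
      ℓ < ℓ' ∧ ℓ' ≤ n := by
  classical
  have hmem : ∀ i, ∃ r : Fin ℓ' → R, u i = ∑ k, vsmul (u' k) (r k) :=
    fun i => hsub (nf_mem_dirSum_self u i)
  choose r hr using hmem
  -- Part 1: refinement of supports
  have part1 : ∀ j : Fin ℓ', (supp (u' j) ∩ ⋃ i, supp (u i)).Nonempty →
      ∃ i : Fin ℓ, supp (u' j) ⊆ supp (u i) := by
    rintro j ⟨p, hpj, hpu⟩
    simp only [Set.mem_iUnion] at hpu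
    obtain ⟨i, hpi⟩ := hpu
    have hpj' : u' j p ≠ 0 := hpj
    have hpi' : u i p ≠ 0 := hpi
    have hcoord : u i p = u' j p * r i j := by
      rw [hr i]; exact nf_sum_coord hdisj' (r i) hpj'
    have hrij : r i j ≠ 0 := by
      intro h0
      rw [hcoord, h0, Nearfield.mul_zero] at hpi'
      exact hpi' rfl
    refine ⟨i, fun q hq => ?_⟩
    have hq' : u' j q ≠ 0 := hq
    have : u i q = u' j q * r i j := by
      rw [hr i]; exact nf_sum_coord hdisj' (r i) hq'
    show u i q ≠ 0
    rw [this]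
    exact nf_mul_ne_zero hq' hrij
  -- ℓ' ≤ n
  have hlen' : ℓ' ≤ n := by
    have hpe : ∀ j : Fin ℓ', ∃ p, p ∈ supp (u' j) := fun j => nf_supp_nonempty (hne' j)
    choose p hp using hpe
    have hinj : Function.Injective p := by
      intro j1 j2 h
      by_contra hne12
      have hmem : p j1 ∈ supp (u' j1) ∩ supp (u' j2) := ⟨hp j1, h ▸ hp j2⟩
      rw [hdisj' j1 j2 hne12] at hmem
      exact hmem
    simpa using Fintype.card_le_of_injective p hinj
  -- The sets K i of indices used in the decomposition of u i
  set K : Fin ℓ → Finset (Fin ℓ') := fun i => Finset.univ.filter (fun k => r i k ≠ 0)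
    with hKdef
  have hKmem : ∀ i k, k ∈ K i ↔ r i k ≠ 0 := by
    intro i k; simp [hKdef]
  have hKne : ∀ i, (K i).Nonempty := by
    intro i
    obtain ⟨p, hpi⟩ := nf_supp_nonempty (hne i)
    have hpi' : u i p ≠ 0 := hpi
    rw [hr i, Finset.sum_apply] at hpi'
    obtain ⟨k, -, hk⟩ := Finset.exists_ne_zero_of_sum_ne_zero hpi'
    refine ⟨k, (hKmem i k).mpr fun h0 => hk ?_⟩
    show u' k p * r i k = 0
    rw [h0, Nearfield.mul_zero]
  have hKsub : ∀ i k, k ∈ K i → supp (u' k) ⊆ supp (u i) := by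
    intro i k hk q hq
    have hq' : u' k q ≠ 0 := hq
    have : u i q = u' k q * r i k := by
      rw [hr i]; exact nf_sum_coord hdisj' (r i) hq'
    show u i q ≠ 0
    rw [this]
    exact nf_mul_ne_zero hq' ((hKmem i k).mp hk)
  have hKdisj : ∀ k i1 i2, k ∈ K i1 → k ∈ K i2 → i1 = i2 := by
    intro k i1 i2 h1 h2
    by_contra hne12
    obtain ⟨q, hq⟩ := nf_supp_nonempty (hne' k)
    have hmem : q ∈ supp (u i1) ∩ supp (u i2) := ⟨hKsub i1 k h1 hq, hKsub i2 k h2 hq⟩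
    rw [hdisj i1 i2 hne12] at hmem
    exact hmem
  have hcard1 : ∀ i, 1 ≤ (K i).card := fun i => Finset.card_pos.mpr (hKne i)
  have hbi : ∀ x ∈ (Finset.univ : Finset (Fin ℓ)), ∀ y ∈ (Finset.univ : Finset (Fin ℓ)),
      x ≠ y → Disjoint (K x) (K y) := by
    intro x _ y _ hxy
    rw [Finset.disjoint_left]
    intro k hkx hky
    exact hxy (hKdisj k x y hkx hky)
  have hsum : ∑ i, (K i).card = (Finset.univ.biUnion K).card :=
    (Finset.card_biUnion hbi).symm
  have hle : ∑ i, (K i).card ≤ ℓ' := by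
    rw [hsum]
    calc (Finset.univ.biUnion K).card ≤ (Finset.univ : Finset (Fin ℓ')).card :=
          Finset.card_le_card (Finset.subset_univ _)
      _ = ℓ' := by simp
  have hge : ℓ ≤ ∑ i, (K i).card := by
    calc ℓ = ∑ _i : Fin ℓ, 1 := by simp
      _ ≤ ∑ i, (K i).card := Finset.sum_le_sum (fun i _ => hcard1 i)
  have hll : ℓ < ℓ' := by
    by_contra hnl
    push_neg at hnl
    have heq : ℓ = ℓ' := le_antisymm (le_trans hge hle) hnl
    have hsumeq : ∑ i, (K i).card = ℓ := le_antisymm (heq ▸ hle) hge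
    have hone : ∀ i, (K i).card = 1 := by
      intro i0
      by_contra hne1
      have hlt : 1 < (K i0).card := lt_of_le_of_ne (hcard1 i0) (Ne.symm hne1)
      have : ∑ _i : Fin ℓ, 1 < ∑ i, (K i).card :=
        Finset.sum_lt_sum (fun i _ => hcard1 i) ⟨i0, Finset.mem_univ i0, hlt⟩
      simp only [Finset.sum_const, Finset.card_univ, Fintype.card_fin, smul_eq_mul,
        mul_one] at this
      omega
    choose e he using fun i => Finset.card_eq_one.mp (hone i)
    have heK : ∀ i, e i ∈ K i := fun i => (he i) ▸ Finset.mem_singleton_self (e i)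
    have heinj : Function.Injective e := by
      intro i1 i2 h
      exact hKdisj (e i1) i1 i2 (heK i1) (h ▸ heK i2)
    have hebij : Function.Bijective e := by
      rw [Fintype.bijective_iff_injective_and_card]
      exact ⟨heinj, by simp [heq]⟩
    set E : Fin ℓ ≃ Fin ℓ' := Equiv.ofBijective e hebij with hE
    have hui : ∀ i, u i = vsmul (u' (e i)) (r i (e i)) := by
      intro i
      rw [hr i, Finset.sum_eq_single (e i) (fun k _ hk => ?_)
        (fun h => absurd (Finset.mem_univ _) h)]
      have h0 : r i k = 0 := by
        by_contra h
        have : k ∈ K i := (hKmem i k).mpr h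
        rw [he i] at this
        exact hk (Finset.mem_singleton.mp this)
      rw [h0, nf_vsmul_zero]
    have hrne : ∀ i, r i (e i) ≠ 0 := fun i => (hKmem i (e i)).mp (heK i)
    have hsub' : dirSum u' ⊆ dirSum u := by
      rintro v ⟨s, rfl⟩
      refine ⟨fun i => (r i (e i))⁻¹ * s (e i), ?_⟩
      rw [← Equiv.sum_comp E (fun k => vsmul (u' k) (s k))]
      refine Finset.sum_congr rfl (fun i _ => ?_)
      show vsmul (u' (e i)) (s (e i)) = vsmul (u i) ((r i (e i))⁻¹ * s (e i))
      rw [hui i, nf_vsmul_vsmul, ← Nearfield.mul_assoc,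
        Nearfield.mul_inv_cancel _ (hrne i), Nearfield.one_mul]
    exact hneq (Set.Subset.antisymm hsub hsub')
  exact ⟨part1, hll, hlen'⟩
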